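/- For every integer m ≥ 0, the polynomials S_n(q) = Σ_{k=0}^{⌊n/2⌋} (−1)^k q^{k(k−1)/2} q^{n−k} [n−k choose k]_q satisfy: S_{6m}(q) = q^{6m²+m}, S_{6m+1}(q) = q^{6m²+5m+1}, S_{6m+2}(q) = q^{6m²+5m+1}(q^{2m+1}−1), S_{6m+3}(q) = −q^{6m²+7m+2}, S_{6m+4}(q) = −q^{6m²+11m+5}, and S_{6m+5}(q) = −q^{6m²+11m+5}(q^{2m+2}−1), as identities in the polynomial ring ℤ[q]. -/

import Mathlib

/-- The Gaussian (q-)binomial coefficient `[n choose k]_q ∈ ℤ[q]`, defined through the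
q-Pascal recurrence `[n+1 choose k+1] = [n choose k] + q^{k+1} [n choose k+1]`. -/
noncomputable def qBinom : ℕ → ℕ → Polynomial ℤ
  | _, 0 => 1
  | 0, _ + 1 => 0
  | n + 1, k + 1 => qBinom n k + Polynomial.X ^ (k + 1) * qBinom n (k + 1)

/-- `S_n(q) = ∑_{k=0}^{⌊n/2⌋} (-1)^k q^{k(k-1)/2} q^{n-k} [n-k choose k]_q ∈ ℤ[q]`,
the value of `S_n(a)` at `a = q`. -/
noncomputable def qBinomSumQ (n : ℕ) : Polynomial ℤ :=
  ∑ k ∈ Finset.range (n / 2 + 1),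
    (-1) ^ k * Polynomial.X ^ (k * (k - 1) / 2) * Polynomial.X ^ (n - k) * qBinom (n - k) k

open Polynomial Finset

lemma qBinom_zero_right (n : ℕ) : qBinom n 0 = 1 := by cases n <;> rfl

lemma qBinom_of_lt : ∀ {n k : ℕ}, n < k → qBinom n k = 0
  | 0, k + 1, _ => rfl
  | n + 1, k + 1, h => by
    rw [qBinom, qBinom_of_lt (by omega), qBinom_of_lt (by omega)]
    ring

lemma qBinom_pascal' (n : ℕ) : ∀ k : ℕ,
    qBinom (n + 1) (k + 1) = Polynomial.X ^ (n - k) * qBinom n k + qBinom n (k + 1) := by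
  induction n with
  | zero =>
    intro k
    cases k with
    | zero => simp [qBinom, qBinom_zero_right]
    | succ k => simp [qBinom, qBinom_of_lt (by omega : (0:ℕ) < k + 1),
        qBinom_of_lt (by omega : (0:ℕ) < k + 2)]
  | succ n ih =>
    intro k
    cases k with
    | zero =>
      show qBinom (n+1+1) (0+1) = _
      conv_rhs => rw [show qBinom (n+1) (0+1) = qBinom n 0 + X ^ (0+1) * qBinom n (0+1) from rfl]
      rw [show qBinom (n+1+1) (0+1) = qBinom (n+1) 0 + X ^ (0+1) * qBinom (n+1) (0+1) from rfl, ih 0]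
      simp [qBinom_zero_right]
      ring
    | succ k =>
      show qBinom (n+1+1) (k+1+1) = _
      conv_rhs => rw [show qBinom (n+1) (k+1+1) = qBinom n (k+1) + X ^ (k+1+1) * qBinom n (k+1+1) from rfl,
        show qBinom (n+1) (k+1) = qBinom n k + X ^ (k+1) * qBinom n (k+1) from rfl]
      rw [show qBinom (n+1+1) (k+1+1) = qBinom (n+1) (k+1) + X ^ (k+1+1) * qBinom (n+1) (k+1+1) from rfl, ih k, ih (k+1)]
      have hnk : n + 1 - (k + 1) = n - k := by omega
      rw [hnk]
      rcases lt_or_ge k n with h | h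
      · have e1 : (X : Polynomial ℤ) ^ (k+1+1) * X ^ (n-(k+1)) = X ^ (n-k) * X ^ (k+1) := by
          rw [← pow_add, ← pow_add]; congr 1; omega
        linear_combination qBinom n (k+1) * e1
      · rw [qBinom_of_lt (by omega : n < k + 1), qBinom_of_lt (by omega : n < k + 1 + 1)]
        ring

lemma tri (k : ℕ) : (k+1) * ((k+1) - 1) / 2 = k * (k - 1) / 2 + k := by
  have h1 := Nat.choose_two_right (k+1)
  have h2 := Nat.choose_two_right k
  have h3 := Nat.choose_succ_succ k 1
  simp [Nat.choose_one_right] at h3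
  omega

noncomputable def qBinomU (n : ℕ) : Polynomial ℤ :=
  ∑ k ∈ Finset.range (n / 2 + 1),
    (-1) ^ k * Polynomial.X ^ (k * (k - 1) / 2 + k) * Polynomial.X ^ (n - k) * qBinom (n - k) k


lemma mulX_qBinomU_succ (n : ℕ) : X * qBinomU (n+1)
    = (∑ k ∈ Finset.range (n/2 + 1),
        X * ((-1) ^ (k+1) * X ^ ((k+1) * ((k+1) - 1) / 2 + (k+1)) * X ^ ((n+1) - (k+1))
          * qBinom ((n+1) - (k+1)) (k+1)))
      + X ^ (n+2) := by
  rw [qBinomU, Finset.sum_range_succ', mul_add, Finset.mul_sum]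
  congr 1
  · apply Finset.sum_subset (Finset.range_subset_range.mpr (by omega : (n+1)/2 ≤ n/2 + 1))
    intro k hk hk2
    have h0 : n + 1 - (k+1) < k + 1 := by simp at hk hk2; omega
    rw [qBinom_of_lt h0]
    ring
  · simp [qBinom_zero_right, pow_succ]
    ring

lemma R1 (n : ℕ) : qBinomSumQ (n+2) = X * qBinomU (n+1) - X * qBinomU n := by
  have hb : (n+2)/2 + 1 = (n/2 + 1) + 1 := by omega
  rw [qBinomSumQ, hb, Finset.sum_range_succ']
  have hsplit : ∀ k ∈ Finset.range (n/2 + 1),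
      ((-1:Polynomial ℤ)) ^ (k+1) * X ^ ((k+1) * ((k+1) - 1) / 2) * X ^ (n+2-(k+1))
          * qBinom (n+2-(k+1)) (k+1)
        = X * ((-1) ^ (k+1) * X ^ ((k+1) * ((k+1) - 1) / 2 + (k+1)) * X ^ ((n+1) - (k+1))
            * qBinom ((n+1) - (k+1)) (k+1))
          + (-(X * ((-1) ^ k * X ^ (k * (k - 1) / 2 + k) * X ^ (n - k) * qBinom (n - k) k))) := by
    intro k hk
    have hk' : k ≤ n/2 := by simp at hk; omega
    have h1 : n + 2 - (k+1) = (n-k) + 1 := by omega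
    have h2 : n + 1 - (k+1) = n - k := by omega
    rw [tri, h1, h2,
      show qBinom ((n-k)+1) (k+1) = qBinom (n-k) k + X ^ (k+1) * qBinom (n-k) (k+1) from rfl]
    ring
  rw [Finset.sum_congr rfl hsplit, Finset.sum_add_distrib]
  have hU := mulX_qBinomU_succ n
  have hN : (∑ k ∈ Finset.range (n/2 + 1),
      -(X * ((-1) ^ k * X ^ (k * (k - 1) / 2 + k) * X ^ (n - k) * qBinom (n - k) k)))
      = -(X * qBinomU n) := by
    rw [qBinomU, Finset.mul_sum, ← Finset.sum_neg_distrib]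
  rw [hU, hN]
  simp [qBinom_zero_right]
  ring

lemma R2 (n : ℕ) : qBinomU (n+2) = X * qBinomU (n+1) - X ^ (n+2) * qBinomSumQ n := by
  have hb : (n+2)/2 + 1 = (n/2 + 1) + 1 := by omega
  rw [qBinomU, hb, Finset.sum_range_succ']
  have hsplit : ∀ k ∈ Finset.range (n/2 + 1),
      ((-1:Polynomial ℤ)) ^ (k+1) * X ^ ((k+1) * ((k+1) - 1) / 2 + (k+1)) * X ^ (n+2-(k+1))
          * qBinom (n+2-(k+1)) (k+1)
        = X * ((-1) ^ (k+1) * X ^ ((k+1) * ((k+1) - 1) / 2 + (k+1)) * X ^ ((n+1) - (k+1))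
            * qBinom ((n+1) - (k+1)) (k+1))
          + (-(X ^ (n+2) * ((-1) ^ k * X ^ (k * (k - 1) / 2) * X ^ (n - k) * qBinom (n - k) k))) := by
    intro k hk
    have hk' : k ≤ n/2 := by simp at hk; omega
    have h1 : n + 2 - (k+1) = (n-k) + 1 := by omega
    have h2 : n + 1 - (k+1) = n - k := by omega
    rw [tri, h1, h2, qBinom_pascal' (n-k) k]
    have e1 : (X : Polynomial ℤ) ^ (k*(k-1)/2 + k + (k+1)) * X ^ ((n-k)+1) * X ^ ((n-k)-k)
        = X ^ (n+2) * X ^ (k*(k-1)/2) * X ^ (n-k) := by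
      rw [← pow_add, ← pow_add, ← pow_add, ← pow_add]
      congr 1
      have h4 := tri k
      omega
    linear_combination ((-1 : Polynomial ℤ)) ^ (k+1) * qBinom (n-k) k * e1
  rw [Finset.sum_congr rfl hsplit, Finset.sum_add_distrib]
  have hU := mulX_qBinomU_succ n
  have hN : (∑ k ∈ Finset.range (n/2 + 1),
      -(X ^ (n+2) * ((-1) ^ k * X ^ (k * (k - 1) / 2) * X ^ (n - k) * qBinom (n - k) k)))
      = -(X ^ (n+2) * qBinomSumQ n) := by
    rw [qBinomSumQ, Finset.mul_sum, ← Finset.sum_neg_distrib]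
  rw [hU, hN]
  simp [qBinom_zero_right]
  ring

lemma qBinomU_base :
    qBinomU 0 = 1 ∧ qBinomU 1 = X ∧ qBinomU 2 = 0 ∧ qBinomU 3 = -X^4 ∧
    qBinomU 4 = -X^6 ∧ qBinomU 5 = 0 := by
  refine ⟨?_, ?_, ?_, ?_, ?_, ?_⟩ <;> (simp [qBinomU, Finset.sum_range_succ, qBinom]; try ring)

lemma qBinomU_form (m : ℕ) :
    qBinomU (6*m) = X^(6*m^2+5*m) ∧
    qBinomU (6*m+1) = X^(6*m^2+7*m+1) ∧
    qBinomU (6*m+2) = 0 ∧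
    qBinomU (6*m+3) = -X^(6*m^2+11*m+4) ∧
    qBinomU (6*m+4) = -X^(6*m^2+13*m+6) ∧
    qBinomU (6*m+5) = 0 := by
  induction m with
  | zero =>
    obtain ⟨b0, b1, b2, b3, b4, b5⟩ := qBinomU_base
    norm_num [b0, b1, b2, b3, b4, b5]
  | succ m ih =>
    obtain ⟨h0, h1, h2, h3, h4, h5⟩ := ih
    have hS4 : qBinomSumQ (6*m+4) = -X^(6*m^2+11*m+5) := by
      have h := R1 (6*m+2)
      rw [show 6*m+2+2 = 6*m+4 from by ring, show 6*m+2+1 = 6*m+3 from by ring, h2, h3] at h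
      rw [h]; ring
    have hS5 : qBinomSumQ (6*m+5) = -X^(6*m^2+13*m+7) + X^(6*m^2+11*m+5) := by
      have h := R1 (6*m+3)
      rw [show 6*m+3+2 = 6*m+5 from by ring, show 6*m+3+1 = 6*m+4 from by ring, h3, h4] at h
      rw [h]; ring
    have hU6 : qBinomU (6*m+6) = X^(6*m^2+17*m+11) := by
      have h := R2 (6*m+4)
      rw [show 6*m+4+2 = 6*m+6 from by ring, show 6*m+4+1 = 6*m+5 from by ring, h5, hS4] at h
      rw [h]; ring
    have hS6 : qBinomSumQ (6*m+6) = X^(6*m^2+13*m+7) := by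
      have h := R1 (6*m+4)
      rw [show 6*m+4+2 = 6*m+6 from by ring, show 6*m+4+1 = 6*m+5 from by ring, h4, h5] at h
      rw [h]; ring
    have hU7 : qBinomU (6*m+7) = X^(6*m^2+19*m+14) := by
      have h := R2 (6*m+5)
      rw [show 6*m+5+2 = 6*m+7 from by ring, show 6*m+5+1 = 6*m+6 from by ring, hU6, hS5] at h
      rw [h]; ring
    have hS7 : qBinomSumQ (6*m+7) = X^(6*m^2+17*m+12) := by
      have h := R1 (6*m+5)
      rw [show 6*m+5+2 = 6*m+7 from by ring, show 6*m+5+1 = 6*m+6 from by ring, hU6, h5] at h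
      rw [h]; ring
    have hU8 : qBinomU (6*m+8) = 0 := by
      have h := R2 (6*m+6)
      rw [show 6*m+6+2 = 6*m+8 from by ring, show 6*m+6+1 = 6*m+7 from by ring, hU7, hS6] at h
      rw [h]; ring
    have hS8 : qBinomSumQ (6*m+8) = X^(6*m^2+19*m+15) - X^(6*m^2+17*m+12) := by
      have h := R1 (6*m+6)
      rw [show 6*m+6+2 = 6*m+8 from by ring, show 6*m+6+1 = 6*m+7 from by ring, hU7, hU6] at h
      rw [h]; ring
    have hU9 : qBinomU (6*m+9) = -X^(6*m^2+23*m+21) := by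
      have h := R2 (6*m+7)
      rw [show 6*m+7+2 = 6*m+9 from by ring, show 6*m+7+1 = 6*m+8 from by ring, hU8, hS7] at h
      rw [h]; ring
    have hS9 : qBinomSumQ (6*m+9) = -X^(6*m^2+19*m+15) := by
      have h := R1 (6*m+7)
      rw [show 6*m+7+2 = 6*m+9 from by ring, show 6*m+7+1 = 6*m+8 from by ring, hU8, hU7] at h
      rw [h]; ring
    have hU10 : qBinomU (6*m+10) = -X^(6*m^2+25*m+25) := by
      have h := R2 (6*m+8)
      rw [show 6*m+8+2 = 6*m+10 from by ring, show 6*m+8+1 = 6*m+9 from by ring, hU9, hS8] at h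
      rw [h]; ring
    have hU11 : qBinomU (6*m+11) = 0 := by
      have h := R2 (6*m+9)
      rw [show 6*m+9+2 = 6*m+11 from by ring, show 6*m+9+1 = 6*m+10 from by ring, hU10, hS9] at h
      rw [h]; ring
    refine ⟨?_, ?_, ?_, ?_, ?_, ?_⟩
    · rw [show 6*(m+1) = 6*m+6 from by ring, hU6]; ring
    · rw [show 6*(m+1)+1 = 6*m+7 from by ring, hU7]; ring
    · rw [show 6*(m+1)+2 = 6*m+8 from by ring, hU8]
    · rw [show 6*(m+1)+3 = 6*m+9 from by ring, hU9]; ring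
    · rw [show 6*(m+1)+4 = 6*m+10 from by ring, hU10]; ring
    · rw [show 6*(m+1)+5 = 6*m+11 from by ring, hU11]

/-- 6-periodicity of the q-binomial sums `S_n(q)`: for every `m ≥ 0`,
`S_{6m}(q) = q^{6m²+m}`, `S_{6m+1}(q) = q^{6m²+5m+1}`,
`S_{6m+2}(q) = q^{6m²+5m+1}(q^{2m+1}-1)`, `S_{6m+3}(q) = -q^{6m²+7m+2}`,
`S_{6m+4}(q) = -q^{6m²+11m+5}`, `S_{6m+5}(q) = -q^{6m²+11m+5}(q^{2m+2}-1)` in `ℤ[q]`. -/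
theorem qBinomSumQ_six_periodic (m : ℕ) :
    qBinomSumQ (6 * m) = Polynomial.X ^ (6 * m ^ 2 + m) ∧
    qBinomSumQ (6 * m + 1) = Polynomial.X ^ (6 * m ^ 2 + 5 * m + 1) ∧
    qBinomSumQ (6 * m + 2)
      = Polynomial.X ^ (6 * m ^ 2 + 5 * m + 1) * (Polynomial.X ^ (2 * m + 1) - 1) ∧
    qBinomSumQ (6 * m + 3) = -Polynomial.X ^ (6 * m ^ 2 + 7 * m + 2) ∧
    qBinomSumQ (6 * m + 4) = -Polynomial.X ^ (6 * m ^ 2 + 11 * m + 5) ∧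
    qBinomSumQ (6 * m + 5)
      = -(Polynomial.X ^ (6 * m ^ 2 + 11 * m + 5) * (Polynomial.X ^ (2 * m + 2) - 1)) := by
  obtain ⟨h0, h1, h2, h3, h4, h5⟩ := qBinomU_form m
  refine ⟨?_, ?_, ?_, ?_, ?_, ?_⟩
  · cases m with
    | zero => simp [qBinomSumQ, qBinom]
    | succ p =>
      obtain ⟨g0, g1, g2, g3, g4, g5⟩ := qBinomU_form p
      have h := R1 (6*p+4)
      rw [show 6*p+4+2 = 6*(p+1) from by ring, show 6*p+4+1 = 6*p+5 from by ring, g5, g4] at h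
      rw [h]; ring
  · cases m with
    | zero => simp [qBinomSumQ, Finset.sum_range_succ, qBinom]
    | succ p =>
      obtain ⟨g0, g1, g2, g3, g4, g5⟩ := qBinomU_form p
      have h := R1 (6*p+5)
      rw [show 6*p+5+2 = 6*(p+1)+1 from by ring, show 6*p+5+1 = 6*(p+1) from by ring, h0, g5] at h
      rw [h]; ring
  · have h := R1 (6*m)
    rw [show 6*m+2 = 6*m+2 from rfl, show 6*m+0+1 = 6*m+1 from by ring] at h
    rw [show (6*m:ℕ)+2 = 6*m+0+2 from by ring, h, h1]
    rw [show (6*m:ℕ) = 6*m from rfl] at h0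
    rw [h0]; ring
  · have h := R1 (6*m+1)
    rw [show 6*m+1+2 = 6*m+3 from by ring, show 6*m+1+1 = 6*m+2 from by ring, h2, h1] at h
    rw [h]; ring
  · have h := R1 (6*m+2)
    rw [show 6*m+2+2 = 6*m+4 from by ring, show 6*m+2+1 = 6*m+3 from by ring, h3, h2] at h
    rw [h]; ring
  · have h := R1 (6*m+3)
    rw [show 6*m+3+2 = 6*m+5 from by ring, show 6*m+3+1 = 6*m+4 from by ring, h4, h3] at h
    rw [h]; ring
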